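/- If n ≡ 7 (mod 8) then there are no self-conjugate 7-core partitions of n. -/

import Mathlib

/-- Hook length of the (0-indexed) cell `(i, j)` of a Young diagram. -/
def hookLen (γ : YoungDiagram) (i j : ℕ) : ℕ :=
  γ.rowLen i + γ.colLen j - i - j - 1

/-- A partition (Young diagram) is `t`-core if no hook length is divisible by `t`. -/
def IsTCore (γ : YoungDiagram) (t : ℕ) : Prop :=
  ∀ c ∈ γ.cells, ¬ t ∣ hookLen γ c.1 c.2

/-- The side length of the Durfee square: the number of diagonal cells. -/
def durfee (γ : YoungDiagram) : ℕ :=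
  (γ.cells.filter fun c => c.1 = c.2).card

open Finset

set_option maxRecDepth 100000

namespace SC7

/-- A lower Finset of naturals is an initial segment. -/
lemma lower_eq_range (S : Finset ℕ) (hS : ∀ a b : ℕ, a ≤ b → b ∈ S → a ∈ S) :
    S = Finset.range S.card := by
  rcases S.eq_empty_or_nonempty with h | h
  · simp [h]
  · obtain ⟨M, hM, hMle⟩ : ∃ M, M ∈ S ∧ ∀ x ∈ S, x ≤ M :=
      ⟨S.max' h, S.max'_mem h, fun x hx => S.le_max' x hx⟩
    have hr : S = Finset.range (M + 1) := by
      ext x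
      simp only [Finset.mem_range, Nat.lt_succ_iff]
      exact ⟨fun hx => hMle x hx, fun hx => hS x _ hx hM⟩
    rw [hr, Finset.card_range]

def ell (γ : YoungDiagram) : ℕ := γ.colLen 0

def bet (γ : YoungDiagram) (i : ℕ) : ℕ := γ.rowLen i + ell γ - 1 - i

def Bset (γ : YoungDiagram) : Finset ℕ := (Finset.range (ell γ)).image (bet γ)

lemma rowLen_pos {γ : YoungDiagram} {i : ℕ} (hi : i < ell γ) : 0 < γ.rowLen i := by
  have h : ((i, 0) : ℕ × ℕ) ∈ γ := YoungDiagram.mem_iff_lt_colLen.mpr hi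
  exact YoungDiagram.mem_iff_lt_rowLen.mp h

lemma bet_add {γ : YoungDiagram} {i : ℕ} (hi : i < ell γ) :
    bet γ i + i + 1 = γ.rowLen i + ell γ := by
  have h1 := rowLen_pos hi; unfold bet; omega

lemma bet_lt {γ : YoungDiagram} {i j : ℕ} (hij : i < j) (hj : j < ell γ) :
    bet γ j < bet γ i := by
  have h1 := bet_add (lt_trans hij hj)
  have h2 := bet_add hj
  have h3 := γ.rowLen_anti i j (le_of_lt hij)
  omega

lemma bet_le {γ : YoungDiagram} {i j : ℕ} (hij : i ≤ j) (hj : j < ell γ) :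
    bet γ j ≤ bet γ i := by
  rcases Nat.lt_or_ge i j with h | h
  · exact le_of_lt (bet_lt h hj)
  · have : i = j := by omega
    rw [this]

lemma mem_Bset {γ : YoungDiagram} {b : ℕ} :
    b ∈ Bset γ ↔ ∃ i, i < ell γ ∧ bet γ i = b := by
  simp [Bset, Finset.mem_image]

lemma card_Bset {γ : YoungDiagram} : (Bset γ).card = ell γ := by
  rw [Bset, Finset.card_image_of_injOn, Finset.card_range]
  intro a ha b hb hab
  simp only [Finset.coe_range, Set.mem_Iio] at ha hb
  by_contra hne
  rcases lt_or_gt_of_ne hne with h | h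
  · exact absurd hab (ne_of_gt (bet_lt h hb))
  · exact absurd hab (ne_of_lt (bet_lt h ha))

lemma card_cells (γ : YoungDiagram) :
    γ.cells.card = ∑ i ∈ Finset.range (ell γ), γ.rowLen i := by
  have hU : γ.cells = (Finset.range (ell γ)).biUnion (fun i => γ.row i) := by
    ext c
    simp only [Finset.mem_biUnion, Finset.mem_range, YoungDiagram.mem_row_iff,
      YoungDiagram.mem_cells]
    constructor
    · intro hc
      refine ⟨c.1, ?_, hc, rfl⟩
      have h0 : ((c.1, 0) : ℕ × ℕ) ∈ γ := γ.up_left_mem le_rfl (Nat.zero_le c.2) hc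
      exact YoungDiagram.mem_iff_lt_colLen.mp h0
    · rintro ⟨i, _, hc, _⟩; exact hc
  rw [hU, Finset.card_biUnion]
  · exact Finset.sum_congr rfl fun i _ => (γ.rowLen_eq_card).symm
  · intro x _ y _ hxy
    rw [Function.onFun, Finset.disjoint_left]
    intro a hax hay
    rw [YoungDiagram.mem_row_iff] at hax hay
    exact hxy (hax.2 ▸ hay.2)

lemma not_mem_Bset {γ : YoungDiagram} {j : ℕ} (hj : j < γ.rowLen 0) :
    ell γ + j - γ.colLen j ∉ Bset γ := by
  rw [mem_Bset]; rintro ⟨i, hi, heq⟩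
  have h1 := bet_add hi
  have h2 : γ.colLen j ≤ ell γ := γ.colLen_anti 0 j (Nat.zero_le j)
  by_cases hc : j < γ.rowLen i
  · have h4 : i < γ.colLen j := YoungDiagram.mem_iff_lt_colLen.mp (YoungDiagram.mem_iff_lt_rowLen.mpr hc)
    omega
  · have h4 : γ.colLen j ≤ i := by
      by_contra h
      push_neg at h
      exact hc (YoungDiagram.mem_iff_lt_rowLen.mp (YoungDiagram.mem_iff_lt_colLen.mpr h))
    omega

lemma exists_compl {γ : YoungDiagram} {c : ℕ} (hc : c ∉ Bset γ) :
    ∃ j d, γ.colLen j = d ∧ d ≤ ell γ ∧ c + d = ell γ + j ∧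
      (∀ i, i < ell γ → (c < bet γ i ↔ i < d)) := by
  classical
  set S := (Finset.range (ell γ)).filter (fun i => c < bet γ i) with hS
  have hlow : ∀ a b : ℕ, a ≤ b → b ∈ S → a ∈ S := by
    intro a b hab hb
    simp only [hS, Finset.mem_filter, Finset.mem_range] at hb ⊢
    exact ⟨lt_of_le_of_lt hab hb.1, lt_of_lt_of_le hb.2 (bet_le hab hb.1)⟩
  set d := S.card with hd
  have hrange : S = Finset.range d := lower_eq_range S hlow
  have hdle : d ≤ ell γ := by
    rw [hd]
    exact le_trans (Finset.card_filter_le _ _) (le_of_eq (Finset.card_range _))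
  have hchar : ∀ i, i < ell γ → (c < bet γ i ↔ i < d) := by
    intro i hi
    constructor
    · intro h
      have hiS : i ∈ S := by simp [hS, hi, h]
      rw [hrange, Finset.mem_range] at hiS
      exact hiS
    · intro h
      have hiS : i ∈ S := by rw [hrange, Finset.mem_range]; exact h
      simp only [hS, Finset.mem_filter] at hiS
      exact hiS.2
  have hbound : ell γ ≤ c + d := by
    by_cases hdl : d < ell γ
    · have hsub : (Finset.Ico d (ell γ)).image (bet γ) ⊆ Finset.range c := by
        intro b hb
        simp only [Finset.mem_image, Finset.mem_Ico] at hb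
        obtain ⟨i, ⟨hdi, hil⟩, rfl⟩ := hb
        simp only [Finset.mem_range]
        have h1 : ¬ c < bet γ i := by rw [hchar i hil]; omega
        have h2 : bet γ i ≠ c := fun he => hc (mem_Bset.mpr ⟨i, hil, he⟩)
        omega
      have hinj : Set.InjOn (bet γ) (Finset.Ico d (ell γ)) := by
        intro a ha b hb hab
        simp only [Finset.coe_Ico, Set.mem_Ico] at ha hb
        by_contra hne
        rcases lt_or_gt_of_ne hne with h | h
        · exact absurd hab (ne_of_gt (bet_lt h hb.2))
        · exact absurd hab (ne_of_lt (bet_lt h ha.2))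
      have hcc := Finset.card_le_card hsub
      rw [Finset.card_image_of_injOn hinj, Nat.card_Ico, Finset.card_range] at hcc
      omega
    · omega
  refine ⟨c + d - ell γ, d, ?_, hdle, by omega, hchar⟩
  set j := c + d - ell γ with hj
  have hle : γ.colLen j ≤ d := by
    by_cases hdl : d < ell γ
    · have h1 : ¬ c < bet γ d := by rw [hchar d hdl]; omega
      have h2 : bet γ d ≠ c := fun he => hc (mem_Bset.mpr ⟨d, hdl, he⟩)
      have h3 := bet_add hdl
      have h4 : γ.rowLen d ≤ j := by omega
      by_contra h5
      push_neg at h5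
      have h6 : j < γ.rowLen d := YoungDiagram.mem_iff_lt_rowLen.mp (YoungDiagram.mem_iff_lt_colLen.mpr h5)
      omega
    · have he : ell γ = γ.colLen 0 := rfl
      exact le_trans (γ.colLen_anti 0 j (Nat.zero_le j)) (by omega)
  have hge : d ≤ γ.colLen j := by
    rcases Nat.eq_zero_or_pos d with h0 | h0
    · omega
    · have hd1 : d - 1 < ell γ := by omega
      have h1 : c < bet γ (d - 1) := (hchar _ hd1).mpr (by omega)
      have h3 := bet_add hd1
      have h4 : j < γ.rowLen (d - 1) := by omega
      have h5 : d - 1 < γ.colLen j := YoungDiagram.mem_iff_lt_colLen.mp (YoungDiagram.mem_iff_lt_rowLen.mpr h4)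
      omega
  omega

lemma core_step {γ : YoungDiagram} (hcore : IsTCore γ 7) {b : ℕ} (hb : b ∈ Bset γ) :
    b % 7 ≠ 0 ∧ (7 < b → b - 7 ∈ Bset γ) := by
  obtain ⟨i, hi, rfl⟩ := mem_Bset.mp hb
  have hmem : ((i, 0) : ℕ × ℕ) ∈ γ := YoungDiagram.mem_iff_lt_colLen.mpr hi
  have h1 := bet_add hi
  constructor
  · intro h0
    apply hcore (i, 0) ((YoungDiagram.mem_cells _).mpr hmem)
    have he : hookLen γ i 0 = bet γ i := by
      unfold hookLen bet ell at *
      omega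
    rw [he]
    exact Nat.dvd_of_mod_eq_zero h0
  · intro h7
    by_contra hnb
    obtain ⟨j, d, hcol, hdle, hsum, hchar⟩ := exists_compl hnb
    have hid : i < d := (hchar i hi).mp (by omega)
    have hmem2 : ((i, j) : ℕ × ℕ) ∈ γ := YoungDiagram.mem_iff_lt_colLen.mpr (by omega)
    apply hcore (i, j) ((YoungDiagram.mem_cells _).mpr hmem2)
    have he : hookLen γ i j = 7 := by
      unfold hookLen ell at *
      omega
    rw [he]

lemma sym_compl {γ : YoungDiagram} (hsym : γ.transpose = γ) (hl : 0 < ell γ) {x : ℕ}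
    (hx : x ≤ bet γ 0) : x ∈ Bset γ ↔ bet γ 0 - x ∉ Bset γ := by
  have hcr : ∀ j, γ.colLen j = γ.rowLen j := by
    intro j
    conv_lhs => rw [← hsym]
    rw [γ.colLen_transpose]
  have hr0 : γ.rowLen 0 = ell γ := (hcr 0).symm
  have h10 := bet_add hl
  constructor
  · intro hxB hNB
    obtain ⟨i, hi, hbi⟩ := mem_Bset.mp hxB
    have h1 := bet_add hi
    have hri : γ.rowLen i ≤ ell γ := by
      rw [← hr0]; exact γ.rowLen_anti 0 i (Nat.zero_le i)
    have hkey : bet γ 0 - x = ell γ + i - γ.colLen i := by rw [hcr i]; omega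
    rw [hkey] at hNB
    exact not_mem_Bset (by omega) hNB
  · intro hN
    by_contra hxB
    obtain ⟨j, d, hcol, hdle, hsum, _⟩ := exists_compl hxB
    have hd1 : 0 < d := by
      by_contra h0
      have hj0 : γ.rowLen 0 ≤ j := by
        by_contra hh
        push_neg at hh
        have := YoungDiagram.mem_iff_lt_colLen.mp (YoungDiagram.mem_iff_lt_rowLen.mpr hh)
        omega
      omega
    have hrj : γ.rowLen j = d := by rw [← hcr]; exact hcol
    have hjl : j < ell γ := YoungDiagram.mem_iff_lt_colLen.mp (YoungDiagram.mem_iff_lt_rowLen.mpr (by omega : (0:ℕ) < γ.rowLen j))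
    have h2 := bet_add hjl
    exact hN (mem_Bset.mpr ⟨j, hjl, by omega⟩)



lemma dec1 : ∀ u v x : ZMod 16, (-14 : ZMod 16) * u * u + 28 * u * x + 8 * u - 14 * v * v + 28 * v * x + 4 * v - 42 * x * x - 28 * x + 12 ≠ 0 := by decide
lemma dec2 : ∀ u v x : ZMod 16, (-14 : ZMod 16) * u * u + 28 * u * x - 8 * u - 14 * v * v + 28 * v * x - 12 * v - 42 * x * x + 16 * x + 14 ≠ 0 := by decide
lemma dec3 : ∀ u v x : ZMod 16, (-14 : ZMod 16) * u * u + 28 * u * x + 16 * u - 14 * v * v + 28 * v * x + 4 * v - 42 * x * x - 40 * x + 6 ≠ 0 := by decide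
lemma dec4 : ∀ u v x : ZMod 16, (-14 : ZMod 16) * u * u + 28 * u * x + 4 * u - 14 * v * v + 28 * v * x - 12 * v - 42 * x * x + 14 ≠ 0 := by decide
lemma dec5 : ∀ u v x : ZMod 16, (-14 : ZMod 16) * u * u + 28 * u * x + 20 * u - 14 * v * v + 28 * v * x + 16 * v - 42 * x * x - 60 * x - 4 ≠ 0 := by decide
lemma dec6 : ∀ u v x : ZMod 16, (-14 : ZMod 16) * u * u + 28 * u * x + 8 * u - 14 * v * v + 28 * v * x + 4 * v - 42 * x * x - 24 * x + 14 ≠ 0 := by decide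

lemma arith (s q n L : ℕ) (m : ℕ → ℕ) (hs1 : 1 ≤ s) (hs6 : s ≤ 6) (hm0 : m 0 = 0)
    (hpair : ∀ r, r ≤ 6 → m r + m ((s + 7 - r) % 7) = q + (if r ≤ s then 1 else 0))
    (hL : L = ∑ r ∈ Finset.range 7, m r)
    (hsum : 2 * n + L * L + 7 * L
      = L + ∑ r ∈ Finset.range 7, (2 * r * m r + 7 * (m r * m r))) :
    n % 8 ≠ 7 := by
  intro hn7
  rw [Finset.sum_range_succ, Finset.sum_range_succ, Finset.sum_range_succ, Finset.sum_range_succ,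
    Finset.sum_range_succ, Finset.sum_range_succ, Finset.sum_range_succ, Finset.sum_range_zero]
    at hL hsum
  have h16 : (16 : ZMod 16) = 0 := by decide
  obtain ⟨k, hk⟩ : ∃ k, n = 8 * k + 7 := ⟨n / 8, by omega⟩
  have h14 : 2 * ((n : ℕ) : ZMod 16) = 14 := by
    have hn : ((n : ℕ) : ZMod 16) = 8 * (k : ZMod 16) + 7 := by exact_mod_cast congrArg (Nat.cast : ℕ → ZMod 16) hk
    rw [hn]; linear_combination (k : ZMod 16) * h16
  have cL : ((L : ℕ) : ZMod 16) = 0 + ((m 0 : ℕ) : ZMod 16) + ((m 1 : ℕ) : ZMod 16) + ((m 2 : ℕ) : ZMod 16) + ((m 3 : ℕ) : ZMod 16) + ((m 4 : ℕ) : ZMod 16) + ((m 5 : ℕ) : ZMod 16) + ((m 6 : ℕ) : ZMod 16) := by exact_mod_cast congrArg (Nat.cast : ℕ → ZMod 16) hL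
  have cS : 2 * ((n : ℕ) : ZMod 16) + ((L : ℕ) : ZMod 16) * ((L : ℕ) : ZMod 16) + 7 * ((L : ℕ) : ZMod 16)
      = ((L : ℕ) : ZMod 16) + (0 + (2 * 0 * (m 0 : ZMod 16) + 7 * ((m 0 : ZMod 16) * (m 0 : ZMod 16))) + (2 * 1 * (m 1 : ZMod 16) + 7 * ((m 1 : ZMod 16) * (m 1 : ZMod 16))) + (2 * 2 * (m 2 : ZMod 16) + 7 * ((m 2 : ZMod 16) * (m 2 : ZMod 16))) + (2 * 3 * (m 3 : ZMod 16) + 7 * ((m 3 : ZMod 16) * (m 3 : ZMod 16))) + (2 * 4 * (m 4 : ZMod 16) + 7 * ((m 4 : ZMod 16) * (m 4 : ZMod 16))) + (2 * 5 * (m 5 : ZMod 16) + 7 * ((m 5 : ZMod 16) * (m 5 : ZMod 16))) + (2 * 6 * (m 6 : ZMod 16) + 7 * ((m 6 : ZMod 16) * (m 6 : ZMod 16)))) := by exact_mod_cast congrArg (Nat.cast : ℕ → ZMod 16) hsum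
  interval_cases s
  · -- s = 1
    have p0 := hpair 0 (by norm_num)
    have pA := hpair 2 (by norm_num)
    have pB := hpair 3 (by norm_num)
    have pR := hpair 4 (by norm_num)
    norm_num at p0 pA pB pR
    have cm0 : ((m 0 : ℕ) : ZMod 16) = 0 := by rw [hm0]; norm_num
    have cA : ((m 2 : ℕ) : ZMod 16) + (m 6 : ZMod 16) = (q : ZMod 16) := by exact_mod_cast congrArg (Nat.cast : ℕ → ZMod 16) pA
    have cB : ((m 3 : ℕ) : ZMod 16) + (m 5 : ZMod 16) = (q : ZMod 16) := by exact_mod_cast congrArg (Nat.cast : ℕ → ZMod 16) pB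
    have cR : ((m 4 : ℕ) : ZMod 16) + (m 4 : ZMod 16) = (q : ZMod 16) := by exact_mod_cast congrArg (Nat.cast : ℕ → ZMod 16) pR
    have c0 : ((m 1 : ℕ) : ZMod 16) = (q : ZMod 16) + 1 := by
      have hms : m 1 = q + 1 := by omega
      exact_mod_cast congrArg (Nat.cast : ℕ → ZMod 16) hms
    have es : ((m 1 : ℕ) : ZMod 16) = 2 * (m 4 : ZMod 16) + 1 := by linear_combination c0 - cR
    have eA : ((m 6 : ℕ) : ZMod 16) = 2 * (m 4 : ZMod 16) - (m 2 : ZMod 16) := by linear_combination cA - cR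
    have eB : ((m 5 : ℕ) : ZMod 16) = 2 * (m 4 : ZMod 16) - (m 3 : ZMod 16) := by linear_combination cB - cR
    rw [cm0, es, eA, eB] at cL cS
    have eL : ((L : ℕ) : ZMod 16) = 7 * (m 4 : ZMod 16) + 1 := by rw [cL]; ring
    rw [eL] at cS
    have final : ((-14 : ZMod 16) * (m 2 : ZMod 16) * (m 2 : ZMod 16) + 28 * (m 2 : ZMod 16) * (m 4 : ZMod 16) + 8 * (m 2 : ZMod 16) - 14 * (m 3 : ZMod 16) * (m 3 : ZMod 16) + 28 * (m 3 : ZMod 16) * (m 4 : ZMod 16) + 4 * (m 3 : ZMod 16) - 42 * (m 4 : ZMod 16) * (m 4 : ZMod 16) - 28 * (m 4 : ZMod 16) + 12) = (0 : ZMod 16) := by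
      linear_combination cS - h14
    exact dec1 _ _ _ final
  · -- s = 2
    have p0 := hpair 0 (by norm_num)
    have pA := hpair 3 (by norm_num)
    have pB := hpair 4 (by norm_num)
    have pR := hpair 1 (by norm_num)
    norm_num at p0 pA pB pR
    have cm0 : ((m 0 : ℕ) : ZMod 16) = 0 := by rw [hm0]; norm_num
    have cA : ((m 3 : ℕ) : ZMod 16) + (m 6 : ZMod 16) = (q : ZMod 16) := by exact_mod_cast congrArg (Nat.cast : ℕ → ZMod 16) pA
    have cB : ((m 4 : ℕ) : ZMod 16) + (m 5 : ZMod 16) = (q : ZMod 16) := by exact_mod_cast congrArg (Nat.cast : ℕ → ZMod 16) pB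
    have cR : ((m 1 : ℕ) : ZMod 16) + (m 1 : ZMod 16) = (q : ZMod 16) + 1 := by exact_mod_cast congrArg (Nat.cast : ℕ → ZMod 16) pR
    have c0 : ((m 2 : ℕ) : ZMod 16) = (q : ZMod 16) + 1 := by
      have hms : m 2 = q + 1 := by omega
      exact_mod_cast congrArg (Nat.cast : ℕ → ZMod 16) hms
    have es : ((m 2 : ℕ) : ZMod 16) = 2 * (m 1 : ZMod 16) := by linear_combination c0 - cR
    have eA : ((m 6 : ℕ) : ZMod 16) = 2 * (m 1 : ZMod 16) - 1 - (m 3 : ZMod 16) := by linear_combination cA - cR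
    have eB : ((m 5 : ℕ) : ZMod 16) = 2 * (m 1 : ZMod 16) - 1 - (m 4 : ZMod 16) := by linear_combination cB - cR
    rw [cm0, es, eA, eB] at cL cS
    have eL : ((L : ℕ) : ZMod 16) = 7 * (m 1 : ZMod 16) - 2 := by rw [cL]; ring
    rw [eL] at cS
    have final : ((-14 : ZMod 16) * (m 3 : ZMod 16) * (m 3 : ZMod 16) + 28 * (m 3 : ZMod 16) * (m 1 : ZMod 16) - 8 * (m 3 : ZMod 16) - 14 * (m 4 : ZMod 16) * (m 4 : ZMod 16) + 28 * (m 4 : ZMod 16) * (m 1 : ZMod 16) - 12 * (m 4 : ZMod 16) - 42 * (m 1 : ZMod 16) * (m 1 : ZMod 16) + 16 * (m 1 : ZMod 16) + 14) = (0 : ZMod 16) := by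
      linear_combination cS - h14
    exact dec2 _ _ _ final
  · -- s = 3
    have p0 := hpair 0 (by norm_num)
    have pA := hpair 1 (by norm_num)
    have pB := hpair 4 (by norm_num)
    have pR := hpair 5 (by norm_num)
    norm_num at p0 pA pB pR
    have cm0 : ((m 0 : ℕ) : ZMod 16) = 0 := by rw [hm0]; norm_num
    have cA : ((m 1 : ℕ) : ZMod 16) + (m 2 : ZMod 16) = (q : ZMod 16) + 1 := by exact_mod_cast congrArg (Nat.cast : ℕ → ZMod 16) pA
    have cB : ((m 4 : ℕ) : ZMod 16) + (m 6 : ZMod 16) = (q : ZMod 16) := by exact_mod_cast congrArg (Nat.cast : ℕ → ZMod 16) pB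
    have cR : ((m 5 : ℕ) : ZMod 16) + (m 5 : ZMod 16) = (q : ZMod 16) := by exact_mod_cast congrArg (Nat.cast : ℕ → ZMod 16) pR
    have c0 : ((m 3 : ℕ) : ZMod 16) = (q : ZMod 16) + 1 := by
      have hms : m 3 = q + 1 := by omega
      exact_mod_cast congrArg (Nat.cast : ℕ → ZMod 16) hms
    have es : ((m 3 : ℕ) : ZMod 16) = 2 * (m 5 : ZMod 16) + 1 := by linear_combination c0 - cR
    have eA : ((m 2 : ℕ) : ZMod 16) = 2 * (m 5 : ZMod 16) + 1 - (m 1 : ZMod 16) := by linear_combination cA - cR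
    have eB : ((m 6 : ℕ) : ZMod 16) = 2 * (m 5 : ZMod 16) - (m 4 : ZMod 16) := by linear_combination cB - cR
    rw [cm0, es, eA, eB] at cL cS
    have eL : ((L : ℕ) : ZMod 16) = 7 * (m 5 : ZMod 16) + 2 := by rw [cL]; ring
    rw [eL] at cS
    have final : ((-14 : ZMod 16) * (m 1 : ZMod 16) * (m 1 : ZMod 16) + 28 * (m 1 : ZMod 16) * (m 5 : ZMod 16) + 16 * (m 1 : ZMod 16) - 14 * (m 4 : ZMod 16) * (m 4 : ZMod 16) + 28 * (m 4 : ZMod 16) * (m 5 : ZMod 16) + 4 * (m 4 : ZMod 16) - 42 * (m 5 : ZMod 16) * (m 5 : ZMod 16) - 40 * (m 5 : ZMod 16) + 6) = (0 : ZMod 16) := by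
      linear_combination cS - h14
    exact dec3 _ _ _ final
  · -- s = 4
    have p0 := hpair 0 (by norm_num)
    have pA := hpair 1 (by norm_num)
    have pB := hpair 5 (by norm_num)
    have pR := hpair 2 (by norm_num)
    norm_num at p0 pA pB pR
    have cm0 : ((m 0 : ℕ) : ZMod 16) = 0 := by rw [hm0]; norm_num
    have cA : ((m 1 : ℕ) : ZMod 16) + (m 3 : ZMod 16) = (q : ZMod 16) + 1 := by exact_mod_cast congrArg (Nat.cast : ℕ → ZMod 16) pA
    have cB : ((m 5 : ℕ) : ZMod 16) + (m 6 : ZMod 16) = (q : ZMod 16) := by exact_mod_cast congrArg (Nat.cast : ℕ → ZMod 16) pB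
    have cR : ((m 2 : ℕ) : ZMod 16) + (m 2 : ZMod 16) = (q : ZMod 16) + 1 := by exact_mod_cast congrArg (Nat.cast : ℕ → ZMod 16) pR
    have c0 : ((m 4 : ℕ) : ZMod 16) = (q : ZMod 16) + 1 := by
      have hms : m 4 = q + 1 := by omega
      exact_mod_cast congrArg (Nat.cast : ℕ → ZMod 16) hms
    have es : ((m 4 : ℕ) : ZMod 16) = 2 * (m 2 : ZMod 16) := by linear_combination c0 - cR
    have eA : ((m 3 : ℕ) : ZMod 16) = 2 * (m 2 : ZMod 16) - (m 1 : ZMod 16) := by linear_combination cA - cR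
    have eB : ((m 6 : ℕ) : ZMod 16) = 2 * (m 2 : ZMod 16) - 1 - (m 5 : ZMod 16) := by linear_combination cB - cR
    rw [cm0, es, eA, eB] at cL cS
    have eL : ((L : ℕ) : ZMod 16) = 7 * (m 2 : ZMod 16) - 1 := by rw [cL]; ring
    rw [eL] at cS
    have final : ((-14 : ZMod 16) * (m 1 : ZMod 16) * (m 1 : ZMod 16) + 28 * (m 1 : ZMod 16) * (m 2 : ZMod 16) + 4 * (m 1 : ZMod 16) - 14 * (m 5 : ZMod 16) * (m 5 : ZMod 16) + 28 * (m 5 : ZMod 16) * (m 2 : ZMod 16) - 12 * (m 5 : ZMod 16) - 42 * (m 2 : ZMod 16) * (m 2 : ZMod 16) + 14) = (0 : ZMod 16) := by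
      linear_combination cS - h14
    exact dec4 _ _ _ final
  · -- s = 5
    have p0 := hpair 0 (by norm_num)
    have pA := hpair 1 (by norm_num)
    have pB := hpair 2 (by norm_num)
    have pR := hpair 6 (by norm_num)
    norm_num at p0 pA pB pR
    have cm0 : ((m 0 : ℕ) : ZMod 16) = 0 := by rw [hm0]; norm_num
    have cA : ((m 1 : ℕ) : ZMod 16) + (m 4 : ZMod 16) = (q : ZMod 16) + 1 := by exact_mod_cast congrArg (Nat.cast : ℕ → ZMod 16) pA
    have cB : ((m 2 : ℕ) : ZMod 16) + (m 3 : ZMod 16) = (q : ZMod 16) + 1 := by exact_mod_cast congrArg (Nat.cast : ℕ → ZMod 16) pB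
    have cR : ((m 6 : ℕ) : ZMod 16) + (m 6 : ZMod 16) = (q : ZMod 16) := by exact_mod_cast congrArg (Nat.cast : ℕ → ZMod 16) pR
    have c0 : ((m 5 : ℕ) : ZMod 16) = (q : ZMod 16) + 1 := by
      have hms : m 5 = q + 1 := by omega
      exact_mod_cast congrArg (Nat.cast : ℕ → ZMod 16) hms
    have es : ((m 5 : ℕ) : ZMod 16) = 2 * (m 6 : ZMod 16) + 1 := by linear_combination c0 - cR
    have eA : ((m 4 : ℕ) : ZMod 16) = 2 * (m 6 : ZMod 16) + 1 - (m 1 : ZMod 16) := by linear_combination cA - cR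
    have eB : ((m 3 : ℕ) : ZMod 16) = 2 * (m 6 : ZMod 16) + 1 - (m 2 : ZMod 16) := by linear_combination cB - cR
    rw [cm0, es, eA, eB] at cL cS
    have eL : ((L : ℕ) : ZMod 16) = 7 * (m 6 : ZMod 16) + 3 := by rw [cL]; ring
    rw [eL] at cS
    have final : ((-14 : ZMod 16) * (m 1 : ZMod 16) * (m 1 : ZMod 16) + 28 * (m 1 : ZMod 16) * (m 6 : ZMod 16) + 20 * (m 1 : ZMod 16) - 14 * (m 2 : ZMod 16) * (m 2 : ZMod 16) + 28 * (m 2 : ZMod 16) * (m 6 : ZMod 16) + 16 * (m 2 : ZMod 16) - 42 * (m 6 : ZMod 16) * (m 6 : ZMod 16) - 60 * (m 6 : ZMod 16) - 4) = (0 : ZMod 16) := by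
      linear_combination cS - h14
    exact dec5 _ _ _ final
  · -- s = 6
    have p0 := hpair 0 (by norm_num)
    have pA := hpair 1 (by norm_num)
    have pB := hpair 2 (by norm_num)
    have pR := hpair 3 (by norm_num)
    norm_num at p0 pA pB pR
    have cm0 : ((m 0 : ℕ) : ZMod 16) = 0 := by rw [hm0]; norm_num
    have cA : ((m 1 : ℕ) : ZMod 16) + (m 5 : ZMod 16) = (q : ZMod 16) + 1 := by exact_mod_cast congrArg (Nat.cast : ℕ → ZMod 16) pA
    have cB : ((m 2 : ℕ) : ZMod 16) + (m 4 : ZMod 16) = (q : ZMod 16) + 1 := by exact_mod_cast congrArg (Nat.cast : ℕ → ZMod 16) pB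
    have cR : ((m 3 : ℕ) : ZMod 16) + (m 3 : ZMod 16) = (q : ZMod 16) + 1 := by exact_mod_cast congrArg (Nat.cast : ℕ → ZMod 16) pR
    have c0 : ((m 6 : ℕ) : ZMod 16) = (q : ZMod 16) + 1 := by
      have hms : m 6 = q + 1 := by omega
      exact_mod_cast congrArg (Nat.cast : ℕ → ZMod 16) hms
    have es : ((m 6 : ℕ) : ZMod 16) = 2 * (m 3 : ZMod 16) := by linear_combination c0 - cR
    have eA : ((m 5 : ℕ) : ZMod 16) = 2 * (m 3 : ZMod 16) - (m 1 : ZMod 16) := by linear_combination cA - cR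
    have eB : ((m 4 : ℕ) : ZMod 16) = 2 * (m 3 : ZMod 16) - (m 2 : ZMod 16) := by linear_combination cB - cR
    rw [cm0, es, eA, eB] at cL cS
    have eL : ((L : ℕ) : ZMod 16) = 7 * (m 3 : ZMod 16) := by rw [cL]; ring
    rw [eL] at cS
    have final : ((-14 : ZMod 16) * (m 1 : ZMod 16) * (m 1 : ZMod 16) + 28 * (m 1 : ZMod 16) * (m 3 : ZMod 16) + 8 * (m 1 : ZMod 16) - 14 * (m 2 : ZMod 16) * (m 2 : ZMod 16) + 28 * (m 2 : ZMod 16) * (m 3 : ZMod 16) + 4 * (m 2 : ZMod 16) - 42 * (m 3 : ZMod 16) * (m 3 : ZMod 16) - 24 * (m 3 : ZMod 16) + 14) = (0 : ZMod 16) := by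
      linear_combination cS - h14
    exact dec6 _ _ _ final

lemma lower_eq_range' (S : Finset ℕ) (hS : ∀ a b : ℕ, a ≤ b → b ∈ S → a ∈ S) :
    S = Finset.range S.card := by
  rcases S.eq_empty_or_nonempty with h | h
  · simp [h]
  · obtain ⟨M, hM, hMle⟩ : ∃ M, M ∈ S ∧ ∀ x ∈ S, x ≤ M :=
      ⟨S.max' h, S.max'_mem h, fun x hx => S.le_max' x hx⟩
    have hr : S = Finset.range (M + 1) := by
      ext x
      simp only [Finset.mem_range, Nat.lt_succ_iff]
      exact ⟨fun hx => hMle x hx, fun hx => hS x _ hx hM⟩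
    rw [hr, Finset.card_range]

lemma mul_pred_add (a : ℕ) : a * (a - 1) + a = a * a := by
  cases a with
  | zero => simp
  | succ p => simp [Nat.succ_sub_one]; ring

lemma main_count (B : Finset ℕ) (N : ℕ) (hN : N ∈ B) (hmax : ∀ b ∈ B, b ≤ N)
    (h7 : ∀ b ∈ B, b % 7 ≠ 0 ∧ (7 < b → b - 7 ∈ B))
    (hsc : ∀ x, x ≤ N → (x ∈ B ↔ N - x ∉ B))
    (n : ℕ) (hn : 2 * ∑ b ∈ B, b = 2 * n + B.card * (B.card - 1)) :
    n % 8 ≠ 7 := by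
  classical
  set m : ℕ → ℕ := fun r => (B.filter (fun b => b % 7 = r)).card with hm
  have hs1 : 1 ≤ N % 7 := Nat.one_le_iff_ne_zero.mpr (h7 N hN).1
  have hs6 : N % 7 ≤ 6 := by omega
  -- full downward closure
  have hdown : ∀ (t : ℕ) (b : ℕ), b ∈ B → b % 7 + 7 * (b / 7 - t) ∈ B := by
    intro t
    induction t with
    | zero =>
      intro b hb
      rw [show b % 7 + 7 * (b / 7 - 0) = b by omega]
      exact hb
    | succ t ih =>
      intro b hb
      have hr1 : b % 7 ≠ 0 := (h7 b hb).1
      rcases le_or_gt (b / 7) t with hle | hlt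
      · rw [show b % 7 + 7 * (b / 7 - (t + 1)) = b % 7 + 7 * (b / 7 - t) by omega]
        exact ih b hb
      · have hprev := ih b hb
        have hgt : 7 < b % 7 + 7 * (b / 7 - t) := by omega
        have := (h7 _ hprev).2 hgt
        rw [show b % 7 + 7 * (b / 7 - t) - 7 = b % 7 + 7 * (b / 7 - (t + 1)) by omega] at this
        exact this
  -- membership characterization
  have hchar : ∀ r, 1 ≤ r → r ≤ 6 → ∀ b : ℕ, b % 7 = r → (b ∈ B ↔ b / 7 < m r) := by
    intro r hr1 hr6
    set Sr := (B.filter (fun b => b % 7 = r)).image (fun b => b / 7) with hSr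
    have hinj : Set.InjOn (fun b => b / 7) (B.filter (fun b => b % 7 = r)) := by
      intro a ha b hb hab
      simp only [coe_filter, Set.mem_setOf_eq] at ha hb
      simp only at hab
      omega
    have hcardSr : Sr.card = m r := Finset.card_image_of_injOn hinj
    have hlow : ∀ a b : ℕ, a ≤ b → b ∈ Sr → a ∈ Sr := by
      intro a b hab hb
      simp only [hSr, Finset.mem_image, Finset.mem_filter] at hb ⊢
      obtain ⟨b', ⟨hb'B, hb'm⟩, hb'd⟩ := hb
      have := hdown (b' / 7 - a) b' hb'B
      rw [show b' % 7 + 7 * (b' / 7 - (b' / 7 - a)) = r + 7 * a by omega] at this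
      exact ⟨r + 7 * a, ⟨this, by omega⟩, by omega⟩
    have hrange : Sr = Finset.range (m r) := by
      rw [← hcardSr]; exact lower_eq_range' Sr hlow
    intro b hbm
    constructor
    · intro hbB
      have : b / 7 ∈ Sr := by
        simp only [hSr, Finset.mem_image, Finset.mem_filter]
        exact ⟨b, ⟨hbB, hbm⟩, rfl⟩
      rw [hrange, Finset.mem_range] at this
      exact this
    · intro hlt
      have : b / 7 ∈ Sr := by rw [hrange, Finset.mem_range]; exact hlt
      simp only [hSr, Finset.mem_image, Finset.mem_filter] at this
      obtain ⟨b', ⟨hb'B, hb'm⟩, hb'd⟩ := this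
      have : b' = b := by omega
      rwa [this] at hb'B
  have hm0 : m 0 = 0 := by
    simp only [hm]
    rw [Finset.card_eq_zero, Finset.filter_eq_empty_iff]
    intro b hb
    exact (h7 b hb).1
  -- pairing
  have hpair : ∀ r, r ≤ 6 →
      m r + m ((N % 7 + 7 - r) % 7) = N / 7 + (if r ≤ N % 7 then 1 else 0) := by
    intro r hr6
    set r' := (N % 7 + 7 - r) % 7 with hr'
    set A := (Finset.range (N + 1)).filter (fun x => x % 7 = r) with hA
    have hA1 : A.filter (fun x => x ∈ B) = B.filter (fun b => b % 7 = r) := by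
      ext x
      simp only [hA, Finset.mem_filter, Finset.mem_range]
      constructor
      · rintro ⟨⟨_, hxm⟩, hxB⟩; exact ⟨hxB, hxm⟩
      · rintro ⟨hxB, hxm⟩; exact ⟨⟨by have := hmax x hxB; omega, hxm⟩, hxB⟩
    have hA2 : (A.filter (fun x => x ∉ B)).image (fun x => N - x)
        = B.filter (fun b => b % 7 = r') := by
      ext y
      simp only [Finset.mem_image, Finset.mem_filter, hA, Finset.mem_range]
      constructor
      · rintro ⟨x, ⟨⟨hxN, hxm⟩, hxB⟩, rfl⟩
        have hyB : N - x ∈ B := by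
          by_contra hny
          exact hxB ((hsc x (by omega)).mpr hny)
        exact ⟨hyB, by omega⟩
      · rintro ⟨hyB, hym⟩
        have hyN : y ≤ N := hmax y hyB
        refine ⟨N - y, ⟨⟨by omega, by omega⟩, ?_⟩, by omega⟩
        intro hxB
        have := (hsc (N - y) (by omega)).mp hxB
        rw [show N - (N - y) = y by omega] at this
        exact this hyB
    have hinj2 : Set.InjOn (fun x => N - x) (A.filter (fun x => x ∉ B)) := by
      intro a ha b hb hab
      simp only [coe_filter, Set.mem_setOf_eq, hA, Finset.mem_filter, Finset.mem_range] at ha hb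
      simp only at hab
      omega
    have hcards : A.card = m r + m r' := by
      rw [← Finset.card_filter_add_card_filter_not (p := fun x => x ∈ B) (s := A)]
      congr 1
      · rw [hA1]
      · rw [← Finset.card_image_of_injOn hinj2, hA2]
    have hAcard : A.card = N / 7 + (if r ≤ N % 7 then 1 else 0) := by
      have himg : A = (Finset.range (N / 7 + (if r ≤ N % 7 then 1 else 0))).image
          (fun k => r + 7 * k) := by
        ext x
        simp only [hA, Finset.mem_filter, Finset.mem_range, Finset.mem_image]
        constructor
        · rintro ⟨hxN, hxm⟩
          exact ⟨x / 7, by split_ifs <;> omega, by omega⟩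
        · rintro ⟨k, hk, rfl⟩
          split_ifs at hk <;> constructor <;> omega
      rw [himg, Finset.card_image_of_injOn (fun a _ b _ hab => by omega), Finset.card_range]
    omega
  -- sum decomposition
  have hdisj : ∀ x ∈ Finset.range 7, ∀ y ∈ Finset.range 7, x ≠ y →
      Disjoint (B.filter (fun b => b % 7 = x)) (B.filter (fun b => b % 7 = y)) := by
    intro x _ y _ hxy
    rw [Finset.disjoint_left]
    intro a hax hay
    simp only [Finset.mem_filter] at hax hay
    exact hxy (hax.2 ▸ hay.2)
  have hBun : B = (Finset.range 7).biUnion (fun r => B.filter (fun b => b % 7 = r)) := by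
    ext b
    simp only [Finset.mem_biUnion, Finset.mem_range, Finset.mem_filter]
    constructor
    · intro hb; exact ⟨b % 7, by omega, hb, rfl⟩
    · rintro ⟨r, _, hb, _⟩; exact hb
  have hcardB : B.card = ∑ r ∈ Finset.range 7, m r := by
    conv_lhs => rw [hBun]
    rw [Finset.card_biUnion hdisj]
  have hfil : ∀ r, 1 ≤ r → r ≤ 6 →
      B.filter (fun b => b % 7 = r) = (Finset.range (m r)).image (fun k => r + 7 * k) := by
    intro r hr1 hr6
    ext b
    simp only [Finset.mem_filter, Finset.mem_image, Finset.mem_range]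
    constructor
    · rintro ⟨hbB, hbm⟩
      exact ⟨b / 7, (hchar r hr1 hr6 b hbm).mp hbB, by omega⟩
    · rintro ⟨k, hk, rfl⟩
      have hbm : (r + 7 * k) % 7 = r := by omega
      refine ⟨(hchar r hr1 hr6 _ hbm).mpr (by omega), hbm⟩
  have hsumfil : ∀ r ∈ Finset.range 7,
      2 * (∑ b ∈ B.filter (fun b => b % 7 = r), b) + 7 * m r
        = 2 * r * m r + 7 * (m r * m r) := by
    intro r hr
    simp only [Finset.mem_range] at hr
    rcases Nat.eq_zero_or_pos r with h0 | h0
    · subst h0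
      have : B.filter (fun b => b % 7 = 0) = ∅ := by
        rw [Finset.filter_eq_empty_iff]; intro b hb; exact (h7 b hb).1
      rw [this, hm0]
      simp
    · rw [hfil r h0 (by omega), Finset.sum_image (fun a _ b _ hab => by omega)]
      have hgauss := Finset.sum_range_id_mul_two (m r)
      have hsplit : ∑ k ∈ Finset.range (m r), (r + 7 * k)
          = r * m r + 7 * ∑ k ∈ Finset.range (m r), k := by
        rw [Finset.sum_add_distrib, Finset.sum_const, Finset.card_range, smul_eq_mul,
          Finset.mul_sum]
        ring
      rw [hsplit]
      have hmm := mul_pred_add (m r)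
      set G := ∑ k ∈ Finset.range (m r), k with hG
      calc 2 * (r * m r + 7 * G) + 7 * m r
          = 2 * r * m r + 7 * (G * 2 + m r) := by ring
        _ = 2 * r * m r + 7 * (m r * (m r - 1) + m r) := by rw [hgauss]
        _ = 2 * r * m r + 7 * (m r * m r) := by rw [hmm]
  have hsumB : 2 * (∑ b ∈ B, b) + 7 * B.card
      = ∑ r ∈ Finset.range 7, (2 * r * m r + 7 * (m r * m r)) := by
    conv_lhs => rw [hcardB, hBun, Finset.sum_biUnion hdisj]
    rw [Finset.mul_sum, Finset.mul_sum, ← Finset.sum_add_distrib]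
    exact Finset.sum_congr rfl hsumfil
  -- apply arith
  have hL1 : 1 ≤ B.card := Finset.card_pos.mpr ⟨N, hN⟩
  apply arith (N % 7) (N / 7) n B.card m hs1 hs6 hm0 hpair hcardB
  have hLL := mul_pred_add B.card
  -- 2n + L*L + 7L = L + T
  have := hsumB
  -- 2ΣB = 2n + L(L-1); so T = 2n + L(L-1) + 7L; want 2n + LL + 7L = L + T
  linarith [hsumB, hn, hLL]


end SC7

theorem stmt14 (n : ℕ) (h : n % 8 = 7) :
    ¬ ∃ γ : YoungDiagram, γ.cells.card = n ∧ γ.transpose = γ ∧ IsTCore γ 7 := by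
  rintro ⟨γ, hcard, hsym, hcore⟩
  have hl : 0 < SC7.ell γ := by
    by_contra h0
    push_neg at h0
    have hempty : γ.cells = ∅ := by
      rw [Finset.eq_empty_iff_forall_notMem]
      intro c hc
      have hc' : ((c.1, 0) : ℕ × ℕ) ∈ γ :=
        γ.up_left_mem le_rfl (Nat.zero_le c.2) ((YoungDiagram.mem_cells c).mp hc)
      have h1 := YoungDiagram.mem_iff_lt_colLen.mp hc'
      have he : SC7.ell γ = γ.colLen 0 := rfl
      omega
    rw [hempty] at hcard
    simp at hcard
    omega
  have hNmem : SC7.bet γ 0 ∈ SC7.Bset γ := SC7.mem_Bset.mpr ⟨0, hl, rfl⟩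
  have hmax : ∀ b ∈ SC7.Bset γ, b ≤ SC7.bet γ 0 := by
    intro b hb
    obtain ⟨i, hi, rfl⟩ := SC7.mem_Bset.mp hb
    exact SC7.bet_le (Nat.zero_le i) hi
  have h7' : ∀ b ∈ SC7.Bset γ, b % 7 ≠ 0 ∧ (7 < b → b - 7 ∈ SC7.Bset γ) :=
    fun b hb => SC7.core_step hcore hb
  have hsc : ∀ x, x ≤ SC7.bet γ 0 → (x ∈ SC7.Bset γ ↔ SC7.bet γ 0 - x ∉ SC7.Bset γ) :=
    fun x hx => SC7.sym_compl hsym hl hx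
  have hinj : ∀ x ∈ Finset.range (SC7.ell γ), ∀ y ∈ Finset.range (SC7.ell γ),
      SC7.bet γ x = SC7.bet γ y → x = y := by
    intro x hx y hy hxy
    simp only [Finset.mem_range] at hx hy
    by_contra hne
    rcases lt_or_gt_of_ne hne with h' | h'
    · exact absurd hxy (ne_of_gt (SC7.bet_lt h' hy))
    · exact absurd hxy (ne_of_lt (SC7.bet_lt h' hx))
  have h1 : ∑ b ∈ SC7.Bset γ, b = ∑ i ∈ Finset.range (SC7.ell γ), SC7.bet γ i :=
    Finset.sum_image hinj
  have hpoint : ∀ i ∈ Finset.range (SC7.ell γ),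
      SC7.bet γ i = γ.rowLen i + (SC7.ell γ - 1 - i) := by
    intro i hi
    have hi' := Finset.mem_range.mp hi
    have := SC7.bet_add hi'
    omega
  have h2 : ∑ i ∈ Finset.range (SC7.ell γ), SC7.bet γ i
      = (∑ i ∈ Finset.range (SC7.ell γ), γ.rowLen i)
        + ∑ i ∈ Finset.range (SC7.ell γ), (SC7.ell γ - 1 - i) := by
    rw [← Finset.sum_add_distrib]
    exact Finset.sum_congr rfl hpoint
  have hrefl : ∑ i ∈ Finset.range (SC7.ell γ), (SC7.ell γ - 1 - i)
      = ∑ i ∈ Finset.range (SC7.ell γ), i := Finset.sum_range_reflect (fun j => j) (SC7.ell γ)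
  have hgauss := Finset.sum_range_id_mul_two (SC7.ell γ)
  have hcells := SC7.card_cells γ
  have hn : 2 * ∑ b ∈ SC7.Bset γ, b
      = 2 * n + (SC7.Bset γ).card * ((SC7.Bset γ).card - 1) := by
    rw [SC7.card_Bset]
    have hLL := SC7.mul_pred_add (SC7.ell γ)
    linarith [h1, h2, hrefl, hgauss, hcells, hcard]
  exact SC7.main_count (SC7.Bset γ) (SC7.bet γ 0) hNmem hmax h7' hsc n hn h
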